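/- Let m ≥ 1 be fixed, n ≥ m, let γ > 0, ε > 0, β ∈ (0,1), and let V ⊆ {z ∈ ℝ^m : ‖z‖₂ = 1} be a γ-net of the unit sphere with |V| ≤ (1 + 2/γ)^m. Let K ⊆ {1,…,n} be any fixed subset with |K| ≤ βn, and let H be the random n×m Toeplitz matrix built from i.i.d. Rademacher inputs. Then with probability at least 1 − 4(1 + 2/γ)^m e^{−ε² n² / (2(n+m−1)m)}, the following hold simultaneously for every z ∈ V: (i) ‖Hz‖₁ ≥ n/(2√m) − εn, and (ii) ‖(Hz)_K‖₁ ≤ βn√m + εn. -/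
import Mathlib


open MeasureTheory ProbabilityTheory Finset Filter

noncomputable section

/-- The `n × m` Toeplitz matrix built from the input sequence
`h = (h_{-m+2}, …, h_n)`, reindexed as `h : Fin (n+m-1) → ℝ`;
the `(i,j)` entry (0-based) is the input with index `i + j`, which corresponds to
`H_{i,j} = h_{i-m+j}` in 1-based indexing. -/
def toeplitz (n m : ℕ) (h : Fin (n + m - 1) → ℝ) : Matrix (Fin n) (Fin m) ℝ :=
  fun i j => h ⟨i.1 + j.1, by have := i.2; have := j.2; omega⟩

/-- The ℓ¹ norm of a vector in `ℝ^k`. -/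
def l1 {k : ℕ} (v : Fin k → ℝ) : ℝ := ∑ i, |v i|

/-- The Euclidean (ℓ²) norm of a vector in `ℝ^k`. -/
def l2 {k : ℕ} (v : Fin k → ℝ) : ℝ := Real.sqrt (∑ i, (v i) ^ 2)

/-- The Rademacher measure on ℝ: values `+1` and `-1` with probability `1/2` each. -/
def radMeasure : Measure ℝ :=
  (2 : ENNReal)⁻¹ • Measure.dirac 1 + (2 : ENNReal)⁻¹ • Measure.dirac (-1)

/-- Product of `d` i.i.d. Rademacher measures on `ℝ^d`. -/
def radPi (d : ℕ) : Measure (Fin d → ℝ) := Measure.pi fun _ => radMeasure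

open Classical in
/-- Number of nonzero entries of a vector. -/
def sparsity {k : ℕ} (v : Fin k → ℝ) : ℕ := (Finset.univ.filter fun i => v i ≠ 0).card

namespace Stmt11Aux

variable {d : ℕ}

/-- The hypercube `{1,-1}^d` as a finset. -/
def cube (d : ℕ) : Finset (Fin d → ℝ) := Fintype.piFinset fun _ => ({1, -1} : Finset ℝ)

lemma mem_cube_iff {ω : Fin d → ℝ} : ω ∈ cube d ↔ ∀ i, ω i = 1 ∨ ω i = -1 := by
  simp [cube, Fintype.mem_piFinset]

lemma card_cube (d : ℕ) : (cube d).card = 2 ^ d := by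
  rw [cube, Fintype.card_piFinset]
  have h : ({1, -1} : Finset ℝ).card = 2 := by
    rw [Finset.card_insert_of_notMem (by norm_num), Finset.card_singleton]
  simp [h]

lemma abs_of_cube {ω : Fin d → ℝ} (hω : ω ∈ cube d) (i : Fin d) : |ω i| = 1 := by
  rcases mem_cube_iff.mp hω i with h | h <;> simp [h]

/-- Flip the `k`-th coordinate. -/
def flip (k : Fin d) (ω : Fin d → ℝ) : Fin d → ℝ := Function.update ω k (-ω k)

lemma flip_mem {ω : Fin d → ℝ} (hω : ω ∈ cube d) (k : Fin d) : flip k ω ∈ cube d := by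
  rw [mem_cube_iff] at *
  intro i
  by_cases h : i = k
  · subst h; rcases hω i with h1 | h1 <;> simp [flip, h1]
  · simpa [flip, Function.update_of_ne h] using hω i

lemma flip_flip (k : Fin d) (ω : Fin d → ℝ) : flip k (flip k ω) = ω := by
  funext i
  by_cases h : i = k
  · subst h; simp [flip]
  · simp [flip, Function.update_of_ne h]

lemma flip_apply_self (k : Fin d) (ω : Fin d → ℝ) : flip k ω k = -ω k := by simp [flip]

lemma flip_apply_ne {i k : Fin d} (h : i ≠ k) (ω : Fin d → ℝ) : flip k ω i = ω i := by
  simp [flip, Function.update_of_ne h]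

lemma sum_flip (k : Fin d) (g : (Fin d → ℝ) → ℝ) :
    ∑ ω ∈ cube d, g (flip k ω) = ∑ ω ∈ cube d, g ω :=
  Finset.sum_nbij' (flip k) (flip k) (fun a ha => flip_mem ha k) (fun a ha => flip_mem ha k)
    (fun a _ => flip_flip k a) (fun a _ => flip_flip k a) (fun _ _ => rfl)

open Classical in
lemma sum_filter_half (k : Fin d) (v : ℝ) (hv : v = 1 ∨ v = -1) (G : (Fin d → ℝ) → ℝ)
    (hG : ∀ τ w, G (Function.update τ k w) = G τ) :
    ∑ τ ∈ cube d, G τ = 2 * ∑ τ ∈ (cube d).filter (fun τ => τ k = v), G τ := by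
  have hne : -v ≠ v := by rcases hv with h | h <;> rw [h] <;> norm_num
  have heq : ∑ τ ∈ (cube d).filter (fun τ => ¬ τ k = v), G τ
      = ∑ τ ∈ (cube d).filter (fun τ => τ k = v), G τ := by
    refine Finset.sum_nbij' (flip k) (flip k) ?_ ?_ ?_ ?_ ?_
    · intro a ha
      rw [Finset.mem_filter] at ha ⊢
      refine ⟨flip_mem ha.1 k, ?_⟩
      rcases mem_cube_iff.mp ha.1 k with h | h <;> rcases hv with h' | h' <;>
        simp [flip_apply_self, h, h'] at ha ⊢
    · intro a ha
      rw [Finset.mem_filter] at ha ⊢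
      refine ⟨flip_mem ha.1 k, ?_⟩
      rw [flip_apply_self, ha.2]
      exact hne
    · intro a _; exact flip_flip k a
    · intro a _; exact flip_flip k a
    · intro a _; rw [flip]; rw [hG]
  have hsplit := Finset.sum_filter_add_sum_filter_not (cube d) (fun τ => τ k = v) G
  linarith [hsplit, heq]

open Classical in
lemma sum_eval (k : Fin d) (G : (Fin d → ℝ) → ℝ → ℝ)
    (hG : ∀ τ w v, G (Function.update τ k w) v = G τ v) :
    2 * ∑ τ ∈ cube d, G τ (τ k) = ∑ τ ∈ cube d, G τ 1 + ∑ τ ∈ cube d, G τ (-1) := by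
  have h1 : ∑ τ ∈ cube d, G τ 1
      = 2 * ∑ τ ∈ (cube d).filter (fun τ => τ k = 1), G τ 1 :=
    sum_filter_half k 1 (Or.inl rfl) _ (fun τ w => hG τ w 1)
  have h2 : ∑ τ ∈ cube d, G τ (-1)
      = 2 * ∑ τ ∈ (cube d).filter (fun τ => τ k = -1), G τ (-1) :=
    sum_filter_half k (-1) (Or.inr rfl) _ (fun τ w => hG τ w (-1))
  have hfil : (cube d).filter (fun τ => ¬ τ k = 1) = (cube d).filter (fun τ => τ k = -1) := by
    apply Finset.filter_congr
    intro τ hτ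
    rcases mem_cube_iff.mp hτ k with h | h <;> simp [h] <;> norm_num
  have hsplit : ∑ τ ∈ cube d, G τ (τ k)
      = ∑ τ ∈ (cube d).filter (fun τ => τ k = 1), G τ (τ k)
        + ∑ τ ∈ (cube d).filter (fun τ => ¬ τ k = 1), G τ (τ k) :=
    (Finset.sum_filter_add_sum_filter_not _ _ _).symm
  have e1 : ∑ τ ∈ (cube d).filter (fun τ => τ k = 1), G τ (τ k)
      = ∑ τ ∈ (cube d).filter (fun τ => τ k = 1), G τ 1 :=
    Finset.sum_congr rfl (fun τ hτ => by rw [(Finset.mem_filter.mp hτ).2])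
  have e2 : ∑ τ ∈ (cube d).filter (fun τ => ¬ τ k = 1), G τ (τ k)
      = ∑ τ ∈ (cube d).filter (fun τ => τ k = -1), G τ (-1) := by
    rw [hfil]
    exact Finset.sum_congr rfl (fun τ hτ => by rw [(Finset.mem_filter.mp hτ).2])
  rw [hsplit, e1, e2, h1, h2]
  ring

lemma piecewise_mem {s : Finset (Fin d)} {τ ω : Fin d → ℝ}
    (hτ : τ ∈ cube d) (hω : ω ∈ cube d) : s.piecewise τ ω ∈ cube d := by
  rw [mem_cube_iff] at *
  intro i
  by_cases h : i ∈ s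
  · rw [Finset.piecewise_eq_of_mem _ _ _ h]; exact hτ i
  · rw [Finset.piecewise_eq_of_notMem _ _ _ h]; exact hω i

/-- Expectation over the hypercube. -/
def eavg (d : ℕ) (f : (Fin d → ℝ) → ℝ) : ℝ := ((2:ℝ)^d)⁻¹ * ∑ τ ∈ cube d, f τ

/-- Average of `f` over the coordinates in `s`, other coordinates fixed to `ω`. -/
def avg (s : Finset (Fin d)) (f : (Fin d → ℝ) → ℝ) (ω : Fin d → ℝ) : ℝ :=
  ((2:ℝ)^d)⁻¹ * ∑ τ ∈ cube d, f (s.piecewise τ ω)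

lemma avg_empty (f : (Fin d → ℝ) → ℝ) (ω : Fin d → ℝ) : avg ∅ f ω = f ω := by
  simp only [avg, Finset.piecewise_empty, Finset.sum_const, card_cube, nsmul_eq_mul]
  push_cast
  field_simp

lemma avg_univ (f : (Fin d → ℝ) → ℝ) (ω : Fin d → ℝ) : avg univ f ω = eavg d f := by
  simp only [avg, eavg, Finset.piecewise_univ]

lemma avg_insert {s : Finset (Fin d)} {k : Fin d} (hk : k ∉ s) {ω : Fin d → ℝ}
    (hω : ω ∈ cube d) (f : (Fin d → ℝ) → ℝ) :
    avg (insert k s) f ω = (avg s f ω + avg s f (flip k ω)) / 2 := by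
  set G : (Fin d → ℝ) → ℝ → ℝ := fun τ v => f (Function.update (s.piecewise τ ω) k v) with hGdef
  have hpw : ∀ (τ : Fin d → ℝ) (w : ℝ),
      s.piecewise (Function.update τ k w) ω = s.piecewise τ ω := by
    intro τ w
    funext i
    by_cases h : i ∈ s
    · rw [Finset.piecewise_eq_of_mem _ _ _ h, Finset.piecewise_eq_of_mem _ _ _ h,
        Function.update_of_ne (by rintro rfl; exact hk h) _ τ]
    · rw [Finset.piecewise_eq_of_notMem _ _ _ h, Finset.piecewise_eq_of_notMem _ _ _ h]
  have hG : ∀ τ w v, G (Function.update τ k w) v = G τ v := by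
    intro τ w v; simp only [hGdef, hpw]
  have key := sum_eval k G hG
  have hL : ∑ τ ∈ cube d, f ((insert k s).piecewise τ ω) = ∑ τ ∈ cube d, G τ (τ k) := by
    refine Finset.sum_congr rfl (fun τ _ => ?_)
    rw [Finset.piecewise_insert]
  have hA : ∑ τ ∈ cube d, G τ (ω k) = ∑ τ ∈ cube d, f (s.piecewise τ ω) := by
    refine Finset.sum_congr rfl (fun τ _ => ?_)
    have h1 : (s.piecewise τ ω) k = ω k := Finset.piecewise_eq_of_notMem _ _ _ hk
    simp only [hGdef]
    rw [← h1, Function.update_eq_self]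
  have hB : ∑ τ ∈ cube d, G τ (-ω k) = ∑ τ ∈ cube d, f (s.piecewise τ (flip k ω)) := by
    refine Finset.sum_congr rfl (fun τ _ => ?_)
    simp only [hGdef]
    rw [Finset.update_piecewise_of_notMem _ _ _ hk]
    rfl
  have hsum : 2 * ∑ τ ∈ cube d, G τ (τ k)
      = ∑ τ ∈ cube d, G τ (ω k) + ∑ τ ∈ cube d, G τ (-ω k) := by
    rcases mem_cube_iff.mp hω k with h | h <;> rw [h] <;> norm_num <;> linarith [key]
  have hhalf : ∑ τ ∈ cube d, G τ (τ k)
      = (∑ τ ∈ cube d, G τ (ω k) + ∑ τ ∈ cube d, G τ (-ω k)) / 2 := by linarith [hsum]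
  simp only [avg]
  rw [hL, hhalf, hA, hB]
  ring

lemma abs_avg_sub_avg_le {s : Finset (Fin d)} {k : Fin d} (hk : k ∉ s) {ω : Fin d → ℝ}
    (hω : ω ∈ cube d) {f : (Fin d → ℝ) → ℝ} {c : ℝ}
    (hf : ∀ η ∈ cube d, |f η - f (Function.update η k (-η k))| ≤ c) :
    |avg s f ω - avg s f (flip k ω)| ≤ c := by
  have hterm : ∀ τ ∈ cube d,
      |f (s.piecewise τ ω) - f (s.piecewise τ (flip k ω))| ≤ c := by
    intro τ hτ
    have hmem : s.piecewise τ ω ∈ cube d := piecewise_mem hτ hω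
    have h1 : (s.piecewise τ ω) k = ω k := Finset.piecewise_eq_of_notMem _ _ _ hk
    have h2 : s.piecewise τ (flip k ω)
        = Function.update (s.piecewise τ ω) k (-(s.piecewise τ ω) k) := by
      rw [h1, Finset.update_piecewise_of_notMem _ _ _ hk]
      rfl
    rw [h2]
    exact hf _ hmem
  have habs : |∑ τ ∈ cube d, (f (s.piecewise τ ω) - f (s.piecewise τ (flip k ω)))|
      ≤ (2:ℝ)^d * c := by
    calc |∑ τ ∈ cube d, (f (s.piecewise τ ω) - f (s.piecewise τ (flip k ω)))|
        ≤ ∑ τ ∈ cube d, |f (s.piecewise τ ω) - f (s.piecewise τ (flip k ω))| :=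
          Finset.abs_sum_le_sum_abs _ _
      _ ≤ ∑ _τ ∈ cube d, c := Finset.sum_le_sum hterm
      _ = (2:ℝ)^d * c := by rw [Finset.sum_const, card_cube, nsmul_eq_mul]; push_cast; ring
  have hdiff : avg s f ω - avg s f (flip k ω)
      = ((2:ℝ)^d)⁻¹ * ∑ τ ∈ cube d, (f (s.piecewise τ ω) - f (s.piecewise τ (flip k ω))) := by
    simp only [avg]
    rw [Finset.sum_sub_distrib]
    ring
  rw [hdiff, abs_mul, abs_of_nonneg (show (0:ℝ) ≤ ((2:ℝ)^d)⁻¹ by positivity)]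
  calc ((2:ℝ)^d)⁻¹ * |∑ τ ∈ cube d, (f (s.piecewise τ ω) - f (s.piecewise τ (flip k ω)))|
      ≤ ((2:ℝ)^d)⁻¹ * ((2:ℝ)^d * c) := by
        apply mul_le_mul_of_nonneg_left habs
        positivity
    _ = c := by field_simp

lemma mgf_aux (f : (Fin d → ℝ) → ℝ) (c : Fin d → ℝ) (l : ℝ) (hl : 0 ≤ l)
    (hf : ∀ η ∈ cube d, ∀ k, |f η - f (Function.update η k (-η k))| ≤ c k)
    (s : Finset (Fin d)) :
    ∑ ω ∈ cube d, Real.exp (l * (eavg d f - avg sᶜ f ω))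
      ≤ (2:ℝ)^d * Real.exp (l^2 * (∑ k ∈ s, (c k)^2) / 8) := by
  classical
  induction s using Finset.induction_on with
  | empty =>
    rw [Finset.compl_empty]
    have : ∀ ω ∈ cube d, Real.exp (l * (eavg d f - avg univ f ω)) = 1 := by
      intro ω _; rw [avg_univ]; simp
    rw [Finset.sum_congr rfl this]
    simp [card_cube]
  | @insert a s ha IH =>
    set s' : Finset (Fin d) := sᶜ.erase a with hs'
    have has' : a ∉ s' := Finset.notMem_erase _ _
    have hins : insert a s' = sᶜ := Finset.insert_erase (Finset.mem_compl.mpr ha)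
    have hcompl : (insert a s)ᶜ = s' := by rw [Finset.compl_insert]
    rw [hcompl]
    set g : (Fin d → ℝ) → ℝ := fun ω => Real.exp (l * (eavg d f - avg s' f ω)) with hg
    have hpair : ∑ ω ∈ cube d, g ω
        = (∑ ω ∈ cube d, (g ω + g (flip a ω))) / 2 := by
      rw [Finset.sum_add_distrib, sum_flip]
      ring
    have hpoint : ∀ ω ∈ cube d, g ω + g (flip a ω)
        ≤ 2 * Real.exp (l * (eavg d f - avg sᶜ f ω)) * Real.exp (l^2 * (c a)^2 / 8) := by
      intro ω hω
      have havg : avg sᶜ f ω = (avg s' f ω + avg s' f (flip a ω)) / 2 := by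
        rw [← hins]; exact avg_insert has' hω f
      set u : ℝ := avg sᶜ f ω - avg s' f ω with hu
      have hflipval : avg s' f (flip a ω) = avg sᶜ f ω + u := by
        rw [hu]; linarith [havg]
      have e1 : l * (eavg d f - avg s' f ω) = l * (eavg d f - avg sᶜ f ω) + l * u := by
        rw [hu]; ring
      have e2 : l * (eavg d f - avg s' f (flip a ω))
          = l * (eavg d f - avg sᶜ f ω) + (-(l * u)) := by
        rw [hflipval]; ring
      have hgsum : g ω + g (flip a ω)
          = Real.exp (l * (eavg d f - avg sᶜ f ω)) * (2 * Real.cosh (l * u)) := by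
        rw [hg]
        simp only []
        rw [e1, e2, Real.exp_add, Real.exp_add, Real.cosh_eq]
        ring
      have hudiff : |u| ≤ c a / 2 := by
        have hd : |avg s' f ω - avg s' f (flip a ω)| ≤ c a :=
          abs_avg_sub_avg_le has' hω (fun η hη => hf η hη a)
        have hrw : u = -((avg s' f ω - avg s' f (flip a ω)) / 2) := by
          rw [hu]; rw [havg]; ring
        rw [hrw, abs_neg, abs_div]
        rw [abs_of_nonneg (by norm_num : (0:ℝ) ≤ 2)]
        linarith [hd]
      have hcosh : Real.cosh (l * u) ≤ Real.exp (l^2 * (c a)^2 / 8) := by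
        calc Real.cosh (l * u) ≤ Real.exp ((l * u)^2 / 2) := Real.cosh_le_exp_half_sq _
          _ ≤ Real.exp (l^2 * (c a)^2 / 8) := by
              apply Real.exp_le_exp.mpr
              have husq : u^2 ≤ (c a / 2)^2 :=
                sq_le_sq' (by linarith [abs_le.mp hudiff, abs_nonneg u])
                  (by linarith [abs_le.mp hudiff])
              nlinarith [sq_nonneg l, mul_le_mul_of_nonneg_left husq (sq_nonneg l)]
      calc g ω + g (flip a ω)
          = Real.exp (l * (eavg d f - avg sᶜ f ω)) * (2 * Real.cosh (l * u)) := hgsum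
        _ ≤ Real.exp (l * (eavg d f - avg sᶜ f ω)) * (2 * Real.exp (l^2 * (c a)^2 / 8)) := by
            apply mul_le_mul_of_nonneg_left _ (Real.exp_nonneg _)
            linarith [hcosh]
        _ = 2 * Real.exp (l * (eavg d f - avg sᶜ f ω)) * Real.exp (l^2 * (c a)^2 / 8) := by
            ring
    calc ∑ ω ∈ cube d, g ω = (∑ ω ∈ cube d, (g ω + g (flip a ω))) / 2 := hpair
      _ ≤ (∑ ω ∈ cube d,
            2 * Real.exp (l * (eavg d f - avg sᶜ f ω)) * Real.exp (l^2 * (c a)^2 / 8)) / 2 := by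
          have := Finset.sum_le_sum hpoint
          linarith
      _ = Real.exp (l^2 * (c a)^2 / 8)
            * ∑ ω ∈ cube d, Real.exp (l * (eavg d f - avg sᶜ f ω)) := by
          rw [← Finset.sum_mul, ← Finset.mul_sum]; ring
      _ ≤ Real.exp (l^2 * (c a)^2 / 8)
            * ((2:ℝ)^d * Real.exp (l^2 * (∑ k ∈ s, (c k)^2) / 8)) := by
          apply mul_le_mul_of_nonneg_left IH (Real.exp_nonneg _)
      _ = (2:ℝ)^d * Real.exp (l^2 * (∑ k ∈ insert a s, (c k)^2) / 8) := by
          rw [Finset.sum_insert ha,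
            show l^2 * ((c a)^2 + ∑ k ∈ s, (c k)^2) / 8
              = l^2*(c a)^2/8 + l^2*(∑ k ∈ s, (c k)^2)/8 by ring, Real.exp_add]
          ring

open Classical in
lemma mcdiarmid_count (f : (Fin d → ℝ) → ℝ) (c : Fin d → ℝ) (t : ℝ) (ht : 0 < t)
    (hC : 0 < ∑ k, (c k)^2)
    (hf : ∀ η ∈ cube d, ∀ k, |f η - f (Function.update η k (-η k))| ≤ c k) :
    (((cube d).filter fun ω => f ω ≤ eavg d f - t).card : ℝ)
      ≤ (2:ℝ)^d * Real.exp (-(2 * t^2) / ∑ k, (c k)^2) := by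
  set C : ℝ := ∑ k, (c k)^2 with hCdef
  set l : ℝ := 4 * t / C with hl
  have hl0 : 0 ≤ l := by positivity
  have hmgf := mgf_aux f c l hl0 hf Finset.univ
  rw [Finset.compl_univ] at hmgf
  have hmgf' : ∑ ω ∈ cube d, Real.exp (l * (eavg d f - f ω))
      ≤ (2:ℝ)^d * Real.exp (l^2 * C / 8) := by
    calc ∑ ω ∈ cube d, Real.exp (l * (eavg d f - f ω))
        = ∑ ω ∈ cube d, Real.exp (l * (eavg d f - avg ∅ f ω)) :=
          Finset.sum_congr rfl (fun ω _ => by rw [avg_empty])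
      _ ≤ (2:ℝ)^d * Real.exp (l^2 * (∑ k ∈ Finset.univ, (c k)^2) / 8) := hmgf
      _ = (2:ℝ)^d * Real.exp (l^2 * C / 8) := rfl
  set B := (cube d).filter fun ω => f ω ≤ eavg d f - t with hB
  have hlower : (B.card : ℝ) * Real.exp (l * t)
      ≤ ∑ ω ∈ cube d, Real.exp (l * (eavg d f - f ω)) := by
    calc (B.card : ℝ) * Real.exp (l * t) = ∑ _ω ∈ B, Real.exp (l * t) := by
          rw [Finset.sum_const, nsmul_eq_mul]
      _ ≤ ∑ ω ∈ B, Real.exp (l * (eavg d f - f ω)) := by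
          apply Finset.sum_le_sum
          intro ω hω
          apply Real.exp_le_exp.mpr
          have := (Finset.mem_filter.mp hω).2
          have htle : t ≤ eavg d f - f ω := by linarith
          exact mul_le_mul_of_nonneg_left htle hl0
      _ ≤ ∑ ω ∈ cube d, Real.exp (l * (eavg d f - f ω)) :=
          Finset.sum_le_sum_of_subset_of_nonneg (Finset.filter_subset _ _)
            (fun ω _ _ => Real.exp_nonneg _)
  have hexp : l^2 * C / 8 - l * t = -(2 * t^2) / C := by
    rw [hl]
    field_simp
    ring
  have hepos : 0 < Real.exp (l * t) := Real.exp_pos _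
  have hfin : (B.card : ℝ) ≤ (2:ℝ)^d * Real.exp (l^2 * C / 8) / Real.exp (l * t) := by
    rw [le_div_iff₀ hepos]
    linarith [hlower, hmgf']
  calc (B.card : ℝ) ≤ (2:ℝ)^d * Real.exp (l^2 * C / 8) / Real.exp (l * t) := hfin
    _ = (2:ℝ)^d * Real.exp (l^2 * C / 8 - l * t) := by
        rw [Real.exp_sub]; ring
    _ = (2:ℝ)^d * Real.exp (-(2 * t^2) / C) := by rw [hexp]

lemma sum_cube_mul_self (a : Fin d) : ∑ ω ∈ cube d, ω a * ω a = (2:ℝ)^d := by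
  have h : ∀ ω ∈ cube d, ω a * ω a = 1 := by
    intro ω hω
    rcases mem_cube_iff.mp hω a with h | h <;> rw [h] <;> norm_num
  rw [Finset.sum_congr rfl h, Finset.sum_const, card_cube, nsmul_eq_mul]
  push_cast; ring

lemma sum_cube_mul {a b : Fin d} (hab : a ≠ b) : ∑ ω ∈ cube d, ω a * ω b = 0 := by
  have h := sum_flip a (fun ω => ω a * ω b)
  have h2 : ∀ ω ∈ cube d, (flip a ω) a * (flip a ω) b = -(ω a * ω b) := by
    intro ω _
    rw [flip_apply_self, flip_apply_ne (Ne.symm hab)]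
    ring
  rw [Finset.sum_congr rfl h2, Finset.sum_neg_distrib] at h
  linarith [h]

lemma sum_cube_sq {mm : ℕ} (a : Fin mm → Fin d) (ha : Function.Injective a)
    (z : Fin mm → ℝ) :
    ∑ ω ∈ cube d, (∑ j, ω (a j) * z j)^2 = (2:ℝ)^d * ∑ j, (z j)^2 := by
  have expand : ∀ ω : Fin d → ℝ, (∑ j, ω (a j) * z j)^2
      = ∑ j, ∑ j', (ω (a j) * ω (a j')) * (z j * z j') := by
    intro ω
    rw [sq, Finset.sum_mul_sum]
    exact Finset.sum_congr rfl fun j _ => Finset.sum_congr rfl fun j' _ => by ring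
  calc ∑ ω ∈ cube d, (∑ j, ω (a j) * z j)^2
      = ∑ ω ∈ cube d, ∑ j, ∑ j', (ω (a j) * ω (a j')) * (z j * z j') :=
        Finset.sum_congr rfl fun ω _ => expand ω
    _ = ∑ j, ∑ ω ∈ cube d, ∑ j', (ω (a j) * ω (a j')) * (z j * z j') := Finset.sum_comm
    _ = ∑ j, ∑ j', ∑ ω ∈ cube d, (ω (a j) * ω (a j')) * (z j * z j') :=
        Finset.sum_congr rfl fun j _ => Finset.sum_comm
    _ = ∑ j, ∑ j', (∑ ω ∈ cube d, ω (a j) * ω (a j')) * (z j * z j') :=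
        Finset.sum_congr rfl fun j _ => Finset.sum_congr rfl fun j' _ => by
          rw [Finset.sum_mul]
    _ = ∑ j : Fin mm, ((2:ℝ)^d) * (z j)^2 := by
        refine Finset.sum_congr rfl fun j _ => ?_
        rw [Finset.sum_eq_single j]
        · rw [sum_cube_mul_self]; ring
        · intro j' _ hj'
          rw [sum_cube_mul (show a j ≠ a j' from fun he => hj' (ha he).symm)]
          ring
        · intro hj; exact absurd (Finset.mem_univ j) hj
    _ = (2:ℝ)^d * ∑ j, (z j)^2 := by rw [← Finset.mul_sum]

lemma abs_inner_le {mm : ℕ} {ω : Fin d → ℝ} (hω : ω ∈ cube d) (a : Fin mm → Fin d)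
    (z : Fin mm → ℝ) : |∑ j, ω (a j) * z j| ≤ ∑ j, |z j| := by
  calc |∑ j, ω (a j) * z j| ≤ ∑ j, |ω (a j) * z j| := Finset.abs_sum_le_sum_abs _ _
    _ = ∑ j, |z j| := Finset.sum_congr rfl fun j _ => by
        rw [abs_mul, abs_of_cube hω, one_mul]

/-- Expected absolute value of a Rademacher linear combination, lower bound. -/
lemma eavg_abs_inner {mm : ℕ} (a : Fin mm → Fin d) (ha : Function.Injective a)
    (z : Fin mm → ℝ) (hz2 : ∑ j, (z j)^2 = 1) (S : ℝ) (hS : 0 < S)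
    (hz1 : ∑ j, |z j| ≤ S) :
    (2:ℝ)^d / S ≤ ∑ ω ∈ cube d, |∑ j, ω (a j) * z j| := by
  have hpt : ∀ ω ∈ cube d, (∑ j, ω (a j) * z j)^2 / S ≤ |∑ j, ω (a j) * z j| := by
    intro ω hω
    have h1 : |∑ j, ω (a j) * z j| ≤ S := le_trans (abs_inner_le hω a z) hz1
    rw [div_le_iff₀ hS]
    calc (∑ j, ω (a j) * z j)^2 = |∑ j, ω (a j) * z j| * |∑ j, ω (a j) * z j| := by
          rw [← abs_mul, abs_of_nonneg (mul_self_nonneg _), sq]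
      _ ≤ |∑ j, ω (a j) * z j| * S :=
          mul_le_mul_of_nonneg_left h1 (abs_nonneg _)
  calc (2:ℝ)^d / S = ((2:ℝ)^d * ∑ j, (z j)^2) / S := by rw [hz2, mul_one]
    _ = (∑ ω ∈ cube d, (∑ j, ω (a j) * z j)^2) / S := by rw [sum_cube_sq a ha z]
    _ = ∑ ω ∈ cube d, (∑ j, ω (a j) * z j)^2 / S := by rw [Finset.sum_div]
    _ ≤ ∑ ω ∈ cube d, |∑ j, ω (a j) * z j| := Finset.sum_le_sum hpt

instance : IsProbabilityMeasure radMeasure := by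
  constructor
  rw [radMeasure, Measure.add_apply, Measure.smul_apply, Measure.smul_apply,
    Measure.dirac_apply_of_mem (Set.mem_univ _), Measure.dirac_apply_of_mem (Set.mem_univ _)]
  simp only [smul_eq_mul, mul_one]
  rw [ENNReal.inv_two_add_inv_two]

lemma radMeasure_singleton {x : ℝ} (hx : x = 1 ∨ x = -1) :
    radMeasure {x} = (2 : ENNReal)⁻¹ := by
  have h1 : (Measure.dirac (1:ℝ)) {x} = if x = 1 then 1 else 0 := by
    rw [Measure.dirac_apply]
    rcases eq_or_ne x 1 with h | h
    · simp [h]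
    · simp [Set.indicator, h, Ne.symm h]
  have h2 : (Measure.dirac (-1:ℝ)) {x} = if x = -1 then 1 else 0 := by
    rw [Measure.dirac_apply]
    rcases eq_or_ne x (-1) with h | h
    · simp [h]
    · simp [Set.indicator, h, Ne.symm h]
  rw [radMeasure, Measure.add_apply, Measure.smul_apply, Measure.smul_apply, h1, h2]
  rcases hx with h | h <;> subst h <;> norm_num

lemma radPi_singleton {ω : Fin d → ℝ} (hω : ω ∈ cube d) :
    radPi d {ω} = ((2 : ENNReal)^d)⁻¹ := by
  have h : ({ω} : Set (Fin d → ℝ)) = Set.pi Set.univ (fun i => {ω i}) :=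
    (Set.univ_pi_singleton ω).symm
  rw [radPi, h, Measure.pi_pi]
  have he : ∀ i, radMeasure {ω i} = (2 : ENNReal)⁻¹ := fun i =>
    radMeasure_singleton (mem_cube_iff.mp hω i)
  rw [Finset.prod_congr rfl (fun i _ => he i), Finset.prod_const, Finset.card_univ,
    Fintype.card_fin, ← ENNReal.inv_pow]

lemma radPi_finset_le {S : Finset (Fin d → ℝ)} (hS : S ⊆ cube d) :
    (S.card : ENNReal) * ((2 : ENNReal)^d)⁻¹ ≤ radPi d (↑S : Set (Fin d → ℝ)) := by
  have hcoe : (↑S : Set (Fin d → ℝ)) = ⋃ ω ∈ S, {ω} := by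
    ext x; simp
  rw [hcoe, measure_biUnion_finset ?hd ?hm]
  case hd =>
    intro a _ b _ hab
    simp [Set.disjoint_singleton, hab]
  case hm => exact fun ω _ => measurableSet_singleton ω
  have h : ∀ ω ∈ S, radPi d {ω} = ((2 : ENNReal)^d)⁻¹ := fun ω hω =>
    radPi_singleton (hS hω)
  rw [Finset.sum_congr rfl h, Finset.sum_const, nsmul_eq_mul]

/-- Index map of the Toeplitz matrix: `(i,j) ↦ i + j`. -/
def idx (n m : ℕ) (i : Fin n) (j : Fin m) : Fin (n + m - 1) :=
  ⟨i.1 + j.1, by have := i.2; have := j.2; omega⟩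

lemma idx_inj (n m : ℕ) (i : Fin n) : Function.Injective (idx n m i) := by
  intro a b h
  have := congrArg Fin.val h
  simp only [idx] at this
  exact Fin.ext (by omega)

lemma mulVec_eq (n m : ℕ) (ω : Fin (n + m - 1) → ℝ) (z : Fin m → ℝ) (i : Fin n) :
    (toeplitz n m ω).mulVec z i = ∑ j, ω (idx n m i j) * z j := rfl

end Stmt11Aux

open Stmt11Aux in
/-- Union bound over a `γ`-net `V` of the unit sphere with
`|V| ≤ (1 + 2/γ)^m` and a fixed subset `K` with `|K| ≤ βn`: with probability at least
`1 - 4(1 + 2/γ)^m e^{-ε²n²/(2(n+m-1)m)}` the Rademacher Toeplitz matrix satisfies,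
simultaneously for every `z ∈ V`, (i) `‖Hz‖₁ ≥ n/(2√m) - εn` and
(ii) `‖(Hz)_K‖₁ ≤ βn√m + εn`. -/
theorem stmt11 (m n : ℕ) (hm : 1 ≤ m) (hmn : m ≤ n)
    (γ ε β : ℝ) (hγ : 0 < γ) (hε : 0 < ε) (hβ0 : 0 < β) (hβ1 : β < 1)
    (V : Finset (Fin m → ℝ))
    (hVsphere : ∀ v ∈ V, l2 v = 1)
    (hVnet : ∀ z : Fin m → ℝ, l2 z = 1 → ∃ v ∈ V, l2 (z - v) ≤ γ)
    (hVcard : (V.card : ℝ) ≤ (1 + 2 / γ) ^ m)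
    (K : Finset (Fin n)) (hK : (K.card : ℝ) ≤ β * n) :
    ENNReal.ofReal
        (1 - 4 * (1 + 2 / γ) ^ m *
          Real.exp (-(ε ^ 2 * (n : ℝ) ^ 2) / (2 * ((n : ℝ) + m - 1) * m))) ≤
      radPi (n + m - 1)
        {h | ∀ z ∈ V,
          (n : ℝ) / (2 * Real.sqrt (m : ℝ)) - ε * n ≤
              l1 ((toeplitz n m h).mulVec z) ∧
            ∑ i ∈ K, |(toeplitz n m h).mulVec z i| ≤
              β * n * Real.sqrt (m : ℝ) + ε * n} := by
  classical
  set d : ℕ := n + m - 1 with hddef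
  have hn1 : 1 ≤ n := le_trans hm hmn
  have hd1 : 1 ≤ d := by omega
  have hm0 : (0:ℝ) < m := by exact_mod_cast hm
  have hn0 : (0:ℝ) < n := by exact_mod_cast hn1
  have hd0 : (0:ℝ) < d := by exact_mod_cast hd1
  have hsqm : 0 < Real.sqrt m := Real.sqrt_pos.mpr hm0
  have hdcast : ((d:ℕ):ℝ) = (n:ℝ) + m - 1 := by
    rw [hddef, Nat.cast_sub (by omega : 1 ≤ n + m)]
    push_cast
    ring
  set Ex : ℝ := Real.exp (-(ε ^ 2 * (n : ℝ) ^ 2) / (2 * ((n : ℝ) + m - 1) * m)) with hEx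
  have hExpos : 0 < Ex := Real.exp_pos _
  -- per-vector data
  set F : (Fin m → ℝ) → (Fin d → ℝ) → ℝ :=
    fun z ω => ∑ i, |∑ j, ω (idx n m i j) * z j| with hF
  have hzfacts : ∀ z ∈ V, (∑ j, (z j)^2 = 1) ∧ (∑ j, |z j| ≤ Real.sqrt m) := by
    intro z hz
    have h2 : ∑ j, (z j)^2 = 1 := Real.sqrt_eq_one.mp (hVsphere z hz)
    refine ⟨h2, ?_⟩
    have hsq : (∑ j, |z j|)^2 ≤ (m:ℝ) := by
      calc (∑ j, |z j|)^2 ≤ (Finset.univ.card : ℝ) * ∑ j, |z j|^2 := by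
            exact sq_sum_le_card_mul_sum_sq
        _ = (m:ℝ) * ∑ j, (z j)^2 := by
            rw [Finset.card_univ, Fintype.card_fin]
            congr 1
            exact Finset.sum_congr rfl fun j _ => by rw [sq_abs]
        _ = (m:ℝ) := by rw [h2, mul_one]
    have := (Real.le_sqrt (Finset.sum_nonneg fun j _ => abs_nonneg _) hm0.le).mpr hsq
    exact this
  -- bounded differences of F z
  have hbdd : ∀ z ∈ V, ∀ η ∈ cube d, ∀ k,
      |F z η - F z (Function.update η k (-η k))| ≤ 2 * Real.sqrt m := by
    intro z hz η hη k
    set η' : Fin d → ℝ := Function.update η k (-η k) with hη'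
    have hstep : ∀ i : Fin n,
        |(∑ j, η (idx n m i j) * z j) - ∑ j, η' (idx n m i j) * z j|
          ≤ ∑ j, (if idx n m i j = k then 2 * |z j| else 0) := by
      intro i
      rw [← Finset.sum_sub_distrib]
      calc |∑ j, (η (idx n m i j) * z j - η' (idx n m i j) * z j)|
          ≤ ∑ j, |η (idx n m i j) * z j - η' (idx n m i j) * z j| :=
            Finset.abs_sum_le_sum_abs _ _
        _ ≤ ∑ j, (if idx n m i j = k then 2 * |z j| else 0) := by
            apply Finset.sum_le_sum
            intro j _
            by_cases h : idx n m i j = k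
            · rw [h, if_pos rfl, hη', Function.update_self]
              rw [show η k * z j - -η k * z j = (2 * η k) * z j by ring, abs_mul, abs_mul]
              rw [abs_of_nonneg (by norm_num : (0:ℝ) ≤ 2), abs_of_cube hη, mul_one]
            · rw [if_neg h]
              rw [hη', Function.update_of_ne h]
              simp
    calc |F z η - F z η'|
        = |∑ i, (|∑ j, η (idx n m i j) * z j| - |∑ j, η' (idx n m i j) * z j|)| := by
          rw [hF]; simp only []; rw [Finset.sum_sub_distrib]
      _ ≤ ∑ i, abs (|∑ j, η (idx n m i j) * z j| - |∑ j, η' (idx n m i j) * z j|) :=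
          Finset.abs_sum_le_sum_abs _ _
      _ ≤ ∑ i, |(∑ j, η (idx n m i j) * z j) - ∑ j, η' (idx n m i j) * z j| :=
          Finset.sum_le_sum fun i _ => abs_abs_sub_abs_le_abs_sub _ _
      _ ≤ ∑ i : Fin n, ∑ j, (if idx n m i j = k then 2 * |z j| else 0) :=
          Finset.sum_le_sum fun i _ => hstep i
      _ = ∑ j : Fin m, ∑ i : Fin n, (if idx n m i j = k then 2 * |z j| else 0) :=
          Finset.sum_comm
      _ ≤ ∑ j : Fin m, 2 * |z j| := by
          apply Finset.sum_le_sum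
          intro j _
          have hcard : (Finset.univ.filter fun i : Fin n => idx n m i j = k).card ≤ 1 := by
            apply Finset.card_le_one.mpr
            intro a ha b hb
            have ha' := (Finset.mem_filter.mp ha).2
            have hb' := (Finset.mem_filter.mp hb).2
            have h1 := congrArg Fin.val ha'
            have h2 := congrArg Fin.val hb'
            simp only [idx] at h1 h2
            exact Fin.ext (by omega)
          rw [← Finset.sum_filter]
          rw [Finset.sum_const, nsmul_eq_mul]
          calc ((Finset.univ.filter fun i : Fin n => idx n m i j = k).card : ℝ) * (2 * |z j|)
              ≤ 1 * (2 * |z j|) := by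
                apply mul_le_mul_of_nonneg_right _ (by positivity)
                exact_mod_cast hcard
            _ = 2 * |z j| := one_mul _
      _ = 2 * ∑ j, |z j| := by rw [Finset.mul_sum]
      _ ≤ 2 * Real.sqrt m := by
          have := (hzfacts z hz).2
          linarith
  -- expectation lower bound
  have heavg : ∀ z ∈ V, (n:ℝ) / Real.sqrt m ≤ eavg d (F z) := by
    intro z hz
    have hone : ∀ i : Fin n,
        (2:ℝ)^d / Real.sqrt m ≤ ∑ ω ∈ cube d, |∑ j, ω (idx n m i j) * z j| := fun i =>
      eavg_abs_inner (idx n m i) (idx_inj n m i) z (hzfacts z hz).1 _ hsqm (hzfacts z hz).2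
    have hswap : ∑ ω ∈ cube d, F z ω
        = ∑ i : Fin n, ∑ ω ∈ cube d, |∑ j, ω (idx n m i j) * z j| := by
      rw [hF]; exact Finset.sum_comm
    have hsum : (n:ℝ) * ((2:ℝ)^d / Real.sqrt m) ≤ ∑ ω ∈ cube d, F z ω := by
      rw [hswap]
      calc (n:ℝ) * ((2:ℝ)^d / Real.sqrt m)
          = ∑ _i : Fin n, (2:ℝ)^d / Real.sqrt m := by
            rw [Finset.sum_const, Finset.card_univ, Fintype.card_fin, nsmul_eq_mul]
        _ ≤ ∑ i : Fin n, ∑ ω ∈ cube d, |∑ j, ω (idx n m i j) * z j| :=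
            Finset.sum_le_sum fun i _ => hone i
    calc (n:ℝ) / Real.sqrt m = ((2:ℝ)^d)⁻¹ * ((n:ℝ) * ((2:ℝ)^d / Real.sqrt m)) := by
          have h1 : Real.sqrt (m:ℝ) ≠ 0 := ne_of_gt hsqm
          have h2 : ((2:ℝ)^d) ≠ 0 := by positivity
          field_simp
          try ring
      _ ≤ ((2:ℝ)^d)⁻¹ * ∑ ω ∈ cube d, F z ω :=
          mul_le_mul_of_nonneg_left hsum (by positivity)
      _ = eavg d (F z) := rfl
  -- bad sets
  set Bad : (Fin m → ℝ) → Finset (Fin d → ℝ) :=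
    fun z => (cube d).filter fun ω => F z ω ≤ eavg d (F z) - ε * n with hBad
  have hBadcard : ∀ z ∈ V, ((Bad z).card : ℝ) ≤ (2:ℝ)^d * Ex := by
    intro z hz
    have hCsum : (∑ k : Fin d, ((2:ℝ) * Real.sqrt m)^2) = 4 * d * m := by
      rw [Finset.sum_const, Finset.card_univ, Fintype.card_fin, nsmul_eq_mul, mul_pow,
        Real.sq_sqrt hm0.le]
      ring
    have hCpos : (0:ℝ) < ∑ k : Fin d, ((2:ℝ) * Real.sqrt m)^2 := by
      rw [hCsum]; positivity
    have h1 := mcdiarmid_count (F z) (fun _ => 2 * Real.sqrt m) (ε * n)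
      (by positivity) hCpos (hbdd z hz)
    rw [hCsum] at h1
    have hexp : -(2 * (ε * n)^2) / (4 * (d:ℝ) * m)
        = -(ε ^ 2 * (n : ℝ) ^ 2) / (2 * ((n : ℝ) + m - 1) * m) := by
      rw [← hdcast]
      rw [div_eq_div_iff (by positivity) (by positivity)]
      ring
    rw [hexp] at h1
    exact h1
  set B : Finset (Fin d → ℝ) := V.biUnion Bad with hB
  set Good : Finset (Fin d → ℝ) := cube d \ B with hGood
  -- Good is inside the event
  have hincl : (↑Good : Set (Fin d → ℝ)) ⊆
      {h : Fin d → ℝ | ∀ z ∈ V,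
          (n : ℝ) / (2 * Real.sqrt (m : ℝ)) - ε * n ≤
              l1 ((toeplitz n m h).mulVec z) ∧
            ∑ i ∈ K, |(toeplitz n m h).mulVec z i| ≤
              β * n * Real.sqrt (m : ℝ) + ε * n} := by
    intro ω hω
    rw [Finset.coe_sdiff] at hω
    obtain ⟨hωc, hωb⟩ := hω
    have hωcube : ω ∈ cube d := hωc
    intro z hz
    have hl1 : l1 ((toeplitz n m ω).mulVec z) = F z ω := by
      rw [l1, hF]
      exact Finset.sum_congr rfl fun i _ => by rw [mulVec_eq]
    constructor
    · -- part (i)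
      have hnotbad : ω ∉ Bad z := by
        intro hcon
        exact hωb (Finset.mem_coe.mpr (Finset.mem_biUnion.mpr ⟨z, hz, hcon⟩))
      have : ¬ (F z ω ≤ eavg d (F z) - ε * n) := by
        intro hcon
        exact hnotbad (Finset.mem_filter.mpr ⟨hωcube, hcon⟩)
      push_neg at this
      have hmono : (n:ℝ) / (2 * Real.sqrt m) ≤ (n:ℝ) / Real.sqrt m := by
        apply div_le_div_of_nonneg_left hn0.le hsqm
        linarith
      rw [hl1]
      have := heavg z hz
      linarith [heavg z hz]
    · -- part (ii)
      have hptwise : ∀ i : Fin n, |(toeplitz n m ω).mulVec z i| ≤ Real.sqrt m := by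
        intro i
        rw [mulVec_eq]
        exact le_trans (abs_inner_le hωcube (idx n m i) z) (hzfacts z hz).2
      calc ∑ i ∈ K, |(toeplitz n m ω).mulVec z i|
          ≤ ∑ _i ∈ K, Real.sqrt m := Finset.sum_le_sum fun i _ => hptwise i
        _ = (K.card : ℝ) * Real.sqrt m := by rw [Finset.sum_const, nsmul_eq_mul]
        _ ≤ β * n * Real.sqrt m :=
            mul_le_mul_of_nonneg_right hK (Real.sqrt_nonneg _)
        _ ≤ β * n * Real.sqrt m + ε * n := by
            have : (0:ℝ) ≤ ε * n := by positivity
            linarith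
  -- counting
  have hGoodsub : Good ⊆ cube d := Finset.sdiff_subset
  have hcount : 1 - 4 * (1 + 2/γ)^m * Ex ≤ (Good.card : ℝ) * ((2:ℝ)^d)⁻¹ := by
    have hQ : (0:ℝ) ≤ (1 + 2/γ)^m := by positivity
    have hBcard : (B.card : ℝ) ≤ (V.card : ℝ) * ((2:ℝ)^d * Ex) := by
      calc (B.card : ℝ) ≤ ((∑ z ∈ V, (Bad z).card : ℕ) : ℝ) := by
            exact_mod_cast Finset.card_biUnion_le
        _ = ∑ z ∈ V, ((Bad z).card : ℝ) := by push_cast; rfl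
        _ ≤ ∑ _z ∈ V, (2:ℝ)^d * Ex := Finset.sum_le_sum fun z hz => hBadcard z hz
        _ = (V.card : ℝ) * ((2:ℝ)^d * Ex) := by rw [Finset.sum_const, nsmul_eq_mul]
    have hGc : (2:ℝ)^d - (V.card : ℝ) * ((2:ℝ)^d * Ex) ≤ (Good.card : ℝ) := by
      have h1 : (cube d).card ≤ Good.card + B.card := Finset.card_le_card_sdiff_add_card
      have h2 : ((cube d).card : ℝ) ≤ (Good.card : ℝ) + (B.card : ℝ) := by exact_mod_cast h1
      rw [card_cube] at h2
      push_cast at h2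
      linarith
    have hVEx : (V.card : ℝ) * Ex ≤ 4 * (1 + 2/γ)^m * Ex := by
      have : (V.card : ℝ) ≤ 4 * (1 + 2/γ)^m := by nlinarith
      exact mul_le_mul_of_nonneg_right this hExpos.le
    have h2dpos : (0:ℝ) < (2:ℝ)^d := by positivity
    have key : (2:ℝ)^d * (1 - 4 * (1 + 2/γ)^m * Ex) ≤ (Good.card : ℝ) := by
      calc (2:ℝ)^d * (1 - 4 * (1 + 2/γ)^m * Ex)
          = (2:ℝ)^d - (2:ℝ)^d * (4 * (1 + 2/γ)^m * Ex) := by ring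
        _ ≤ (2:ℝ)^d - (2:ℝ)^d * ((V.card : ℝ) * Ex) := by
            have := mul_le_mul_of_nonneg_left hVEx h2dpos.le
            linarith
        _ = (2:ℝ)^d - (V.card : ℝ) * ((2:ℝ)^d * Ex) := by ring
        _ ≤ (Good.card : ℝ) := hGc
    rw [← le_div_iff₀' h2dpos] at key
    calc 1 - 4 * (1 + 2/γ)^m * Ex ≤ (Good.card : ℝ) / (2:ℝ)^d := key
      _ = (Good.card : ℝ) * ((2:ℝ)^d)⁻¹ := div_eq_mul_inv _ _
  -- move to ENNReal
  have hconv : ENNReal.ofReal ((Good.card : ℝ) * ((2:ℝ)^d)⁻¹)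
      = (Good.card : ENNReal) * ((2 : ENNReal)^d)⁻¹ := by
    rw [ENNReal.ofReal_mul (Nat.cast_nonneg _), ENNReal.ofReal_natCast,
      ENNReal.ofReal_inv_of_pos (by positivity), ENNReal.ofReal_pow (by norm_num)]
    norm_num
  calc ENNReal.ofReal (1 - 4 * (1 + 2/γ)^m * Ex)
      ≤ ENNReal.ofReal ((Good.card : ℝ) * ((2:ℝ)^d)⁻¹) := ENNReal.ofReal_le_ofReal hcount
    _ = (Good.card : ENNReal) * ((2 : ENNReal)^d)⁻¹ := hconv
    _ ≤ radPi d (↑Good : Set (Fin d → ℝ)) := radPi_finset_le hGoodsub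
    _ ≤ radPi d {h : Fin d → ℝ | ∀ z ∈ V,
          (n : ℝ) / (2 * Real.sqrt (m : ℝ)) - ε * n ≤
              l1 ((toeplitz n m h).mulVec z) ∧
            ∑ i ∈ K, |(toeplitz n m h).mulVec z i| ≤
              β * n * Real.sqrt (m : ℝ) + ε * n} := measure_mono hincl
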